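/- arXiv:1612.04060 — 4 statements merged into one kernel-verified Lean document; each statement's English description precedes it below -/
import Mathlib

section
/- Let H ∈ C^{m×n} with full column rank and C ∈ C^{m×m} Hermitian positive definite. Define G = H^H C^{-1} H + H^T (C^{-1})^* H^* and E = G^{-1} H^H C^{-1}. Then E C E^H + E^* C^* E^T = G^{-1}; i.e., the covariance of the BWLUE for real parameter vectors equals (2 Re(H^H C^{-1} H))^{-1}. -/
open Matrix ComplexOrder

private lemma map_conj_eq {k l : ℕ} (M : Matrix (Fin k) (Fin l) ℂ) :
    M.map (starRingEnd ℂ) = Mᴴᵀ := by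
  ext i j; simp [conjTranspose_apply]

/-- The matrix `G = Hᴴ C⁻¹ H + Hᵀ (C⁻¹)* H*`. -/
noncomputable def Gmat {m n : ℕ} (H : Matrix (Fin m) (Fin n) ℂ)
    (C : Matrix (Fin m) (Fin m) ℂ) : Matrix (Fin n) (Fin n) ℂ :=
  Hᴴ * C⁻¹ * H + Hᵀ * (C⁻¹).map (starRingEnd ℂ) * H.map (starRingEnd ℂ)

/-- The estimator matrix `E = G⁻¹ Hᴴ C⁻¹`. -/
noncomputable def Emat {m n : ℕ} (H : Matrix (Fin m) (Fin n) ℂ)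
    (C : Matrix (Fin m) (Fin m) ℂ) : Matrix (Fin n) (Fin m) ℂ :=
  (Gmat H C)⁻¹ * Hᴴ * C⁻¹

/-- The covariance of the BWLUE for real parameter vectors:
`E C Eᴴ + E* C* Eᵀ = G⁻¹`. -/
theorem stmt8 {m n : ℕ} (H : Matrix (Fin m) (Fin n) ℂ) (C : Matrix (Fin m) (Fin m) ℂ)
    (hC : C.PosDef) (hrank : H.rank = n) :
    Emat H C * C * (Emat H C)ᴴ
        + (Emat H C).map (starRingEnd ℂ) * C.map (starRingEnd ℂ) * (Emat H C)ᵀ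
      = (Gmat H C)⁻¹ := by
  -- injectivity of mulVec from full column rank
  have hinj : Function.Injective (H.mulVec) := by
    have h1 := LinearMap.finrank_range_add_finrank_ker H.mulVecLin
    rw [Module.finrank_pi, Fintype.card_fin] at h1
    rw [Matrix.rank] at hrank
    have hker : LinearMap.ker H.mulVecLin = ⊥ :=
      Submodule.finrank_eq_zero.mp (by omega)
    have := LinearMap.ker_eq_bot.mp hker
    exact this
  have hCi : (C⁻¹).PosDef := hC.inv
  have hCiH : (C⁻¹)ᴴ = C⁻¹ := hCi.1.eq
  set A := Hᴴ * C⁻¹ * H with hA_def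
  -- A is positive definite
  have hA : A.PosDef := by
    refine posDef_iff_dotProduct_mulVec.mpr ⟨isHermitian_conjTranspose_mul_mul H hCi.1, fun x hx => ?_⟩
    have hHx : H *ᵥ x ≠ 0 := by
      intro h
      exact hx (hinj (by simpa using h))
    have := hCi.dotProduct_mulVec_pos hHx
    convert this using 1
    rw [hA_def, ← mulVec_mulVec, ← mulVec_mulVec, dotProduct_mulVec, star_mulVec]
  -- the second summand of G is Aᵀ
  have hAT : Hᵀ * (C⁻¹).map (starRingEnd ℂ) * H.map (starRingEnd ℂ) = Aᵀ := by
    rw [map_conj_eq, map_conj_eq, hCiH, hA_def, transpose_mul, transpose_mul, Matrix.mul_assoc]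
  have hG_def : Gmat H C = A + Aᵀ := by rw [Gmat, hAT, hA_def]
  have hG : (Gmat H C).PosDef := by
    rw [hG_def]; exact hA.add hA.transpose
  set G := Gmat H C with hGdef
  have hGu : IsUnit G.det := isUnit_iff_isUnit_det G |>.mp hG.isUnit
  have hCu : IsUnit C.det := isUnit_iff_isUnit_det C |>.mp hC.isUnit
  -- symmetries of G⁻¹
  have hGH : Gᴴ = G := hG.isHermitian.eq
  have hGT : Gᵀ = G := by rw [hG_def, transpose_add, transpose_transpose, add_comm]
  have hGiH : (G⁻¹)ᴴ = G⁻¹ := by rw [conjTranspose_nonsing_inv, hGH]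
  have hGiT : (G⁻¹)ᵀ = G⁻¹ := by rw [transpose_nonsing_inv, hGT]
  have hGiC : (G⁻¹).map (starRingEnd ℂ) = G⁻¹ := by rw [map_conj_eq, hGiH, hGiT]
  -- compute the first summand
  have e1 : Emat H C * C * (Emat H C)ᴴ = G⁻¹ * A * G⁻¹ := by
    rw [Emat, ← hGdef]
    rw [conjTranspose_mul, conjTranspose_mul, hGiH, hCiH, conjTranspose_conjTranspose]
    have h1 : G⁻¹ * Hᴴ * C⁻¹ * C = G⁻¹ * Hᴴ := by
      rw [Matrix.mul_assoc (G⁻¹ * Hᴴ), nonsing_inv_mul C hCu, Matrix.mul_one]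
    rw [h1, hA_def]
    simp only [Matrix.mul_assoc]
  -- compute the second summand
  have e2 : (Emat H C).map (starRingEnd ℂ) * C.map (starRingEnd ℂ) * (Emat H C)ᵀ
      = G⁻¹ * Aᵀ * G⁻¹ := by
    rw [Emat, ← hGdef]
    have hmap : (G⁻¹ * Hᴴ * C⁻¹).map (starRingEnd ℂ)
        = (G⁻¹).map (starRingEnd ℂ) * (Hᴴ).map (starRingEnd ℂ) * (C⁻¹).map (starRingEnd ℂ) := by
      simp [Matrix.map_mul]
    have hHHc : (Hᴴ).map (starRingEnd ℂ) = Hᵀ := by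
      rw [map_conj_eq, conjTranspose_conjTranspose]
    have hcc : (C⁻¹).map (starRingEnd ℂ) * C.map (starRingEnd ℂ) = 1 := by
      rw [← Matrix.map_mul, nonsing_inv_mul C hCu]
      simp
    rw [hmap, hGiC, hHHc, transpose_mul, transpose_mul, hGiT]
    have h2 : G⁻¹ * Hᵀ * (C⁻¹).map (starRingEnd ℂ) * C.map (starRingEnd ℂ) = G⁻¹ * Hᵀ := by
      rw [Matrix.mul_assoc (G⁻¹ * Hᵀ), hcc, Matrix.mul_one]
    rw [h2, ← hAT, map_conj_eq (C⁻¹), hCiH, map_conj_eq H]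
    simp only [Matrix.mul_assoc]
  rw [e1, e2]
  calc G⁻¹ * A * G⁻¹ + G⁻¹ * Aᵀ * G⁻¹ = G⁻¹ * (A + Aᵀ) * G⁻¹ := by
        rw [Matrix.mul_add, Matrix.add_mul]
    _ = G⁻¹ * G * G⁻¹ := by rw [← hG_def]
    _ = G⁻¹ := by rw [nonsing_inv_mul G hGu, one_mul]
end

section
/- Let H ∈ C^{m×n} with full column rank and C ∈ C^{m×m} Hermitian positive definite. Among all vectors e ∈ C^m satisfying the unbiasedness constraint e^H H + e^T H^* = u_i^T (where u_i is the i-th standard basis vector of R^n), the quantity e^H C e + e^T C^* e^* is minimized by e_i^H = u_i^T (2 Re(H^H C^{-1} H))^{-1} H^H C^{-1}. -/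
open Matrix ComplexOrder

/-- The variance objective `eᴴ C e + eᵀ C* e*`. -/
noncomputable def obj {m : ℕ} (C : Matrix (Fin m) (Fin m) ℂ) (e : Fin m → ℂ) : ℂ :=
  star e ⬝ᵥ C.mulVec e + e ⬝ᵥ (C.map (starRingEnd ℂ)).mulVec (star e)

private lemma conj_vecMul {a b : ℕ} (P : Matrix (Fin a) (Fin b) ℂ) (v : Fin a → ℂ) :
    v ᵥ* P.map (starRingEnd ℂ) = star (star v ᵥ* P) := by
  ext k
  simp only [Matrix.vecMul, dotProduct, Matrix.map_apply, Pi.star_apply, star_sum, star_mul',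
    star_star, starRingEnd_apply]

private lemma conj_dot {a b : ℕ} (P : Matrix (Fin a) (Fin b) ℂ) (u : Fin a → ℂ)
    (v : Fin b → ℂ) :
    u ⬝ᵥ (P.map (starRingEnd ℂ)) *ᵥ (star v) = star (star u ⬝ᵥ P *ᵥ v) := by
  simp only [dotProduct, Matrix.mulVec, Matrix.map_apply, Pi.star_apply, star_sum, star_mul',
    star_star, starRingEnd_apply]

private lemma rowMul {a b c : ℕ} (P : Matrix (Fin a) (Fin b) ℂ)
    (Q : Matrix (Fin b) (Fin c) ℂ) (i : Fin a) :
    P i ᵥ* Q = (P * Q) i := by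
  ext k; simp [Matrix.vecMul, Matrix.mul_apply, dotProduct]

/-- Among all `e` satisfying the unbiasedness constraint `eᴴ H + eᵀ H* = uᵢᵀ`,
the variance `eᴴ C e + eᵀ C* e*` is minimized by
`eᵢᴴ = uᵢᵀ (2 Re(Hᴴ C⁻¹ H))⁻¹ Hᴴ C⁻¹`. -/
theorem stmt9 {m n : ℕ} (H : Matrix (Fin m) (Fin n) ℂ) (C : Matrix (Fin m) (Fin m) ℂ)
    (hC : C.PosDef) (hrank : H.rank = n) (i : Fin n)
    (e₀ : Fin m → ℂ)
    (he₀ : e₀ = fun j =>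
      star ((((2 : ℂ) • (Hᴴ * C⁻¹ * H).map (fun z => (z.re : ℂ)))⁻¹ * Hᴴ * C⁻¹) i j)) :
    (star e₀ ᵥ* H + e₀ ᵥ* H.map (starRingEnd ℂ) = Pi.single i 1) ∧
    ∀ e : Fin m → ℂ,
      star e ᵥ* H + e ᵥ* H.map (starRingEnd ℂ) = Pi.single i 1 →
      obj C e₀ ≤ obj C e := by
  -- injectivity of `H.mulVec`
  have hker : LinearMap.ker H.mulVecLin = ⊥ := by
    have h1 := LinearMap.finrank_range_add_finrank_ker H.mulVecLin
    rw [Matrix.rank] at hrank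
    rw [hrank] at h1
    have h2 : Module.finrank ℂ (Fin n → ℂ) = n := by simp
    rw [h2] at h1
    have h3 : Module.finrank ℂ (LinearMap.ker H.mulVecLin) = 0 := by omega
    exact Submodule.finrank_eq_zero.mp h3
  have hHinj : Function.Injective H.mulVec := by
    have h := LinearMap.ker_eq_bot.mp hker
    intro x y hxy
    exact h (by simpa [Matrix.mulVecLin_apply] using hxy)
  have hCi : (C⁻¹).PosDef := hC.inv
  have hA : (Hᴴ * C⁻¹ * H).PosDef := by
    refine Matrix.PosDef.of_dotProduct_mulVec_pos (Matrix.isHermitian_conjTranspose_mul_mul H hCi.1) fun x hx => ?_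
    have hx' : H *ᵥ x ≠ 0 := fun h => hx (hHinj (by simpa using h))
    have := hCi.dotProduct_mulVec_pos hx'
    simpa only [star_mulVec, dotProduct_mulVec, vecMul_vecMul] using this
  set A := Hᴴ * C⁻¹ * H with hAdef
  set M := (2 : ℂ) • A.map (fun z => (z.re : ℂ)) with hMdef
  have hMeq : M = A + Aᵀ := by
    ext j k
    have hjk : (starRingEnd ℂ) (A j k) = A k j := by
      conv_rhs => rw [← hA.1]
      rw [Matrix.conjTranspose_apply]
      rfl
    simp only [hMdef, Matrix.smul_apply, Matrix.map_apply, Matrix.add_apply,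
      Matrix.transpose_apply, smul_eq_mul]
    rw [← hjk, Complex.add_conj]
    push_cast
    ring
  have hMpos : M.PosDef := by rw [hMeq]; exact hA.add hA.transpose
  have hMdet : IsUnit M.det := hMpos.det_pos.ne'.isUnit
  have hCdet : IsUnit C.det := hC.det_pos.ne'.isUnit
  have hNM : M⁻¹ * M = 1 := Matrix.nonsing_inv_mul M hMdet
  have hCC : C⁻¹ * C = 1 := Matrix.nonsing_inv_mul C hCdet
  have hMreal : M.map (starRingEnd ℂ) = M := by
    ext j k
    simp only [hMdef, Matrix.map_apply, Matrix.smul_apply, smul_eq_mul]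
    rw [_root_.map_mul, Complex.conj_ofReal, map_ofNat]
  have hNreal : M⁻¹.map (starRingEnd ℂ) = M⁻¹ := by
    have h1 : (M⁻¹.map (starRingEnd ℂ)) * M = 1 := by
      calc M⁻¹.map (starRingEnd ℂ) * M = M⁻¹.map (starRingEnd ℂ) * M.map (starRingEnd ℂ) := by
            rw [hMreal]
        _ = (M⁻¹ * M).map (starRingEnd ℂ) := (Matrix.map_mul ..).symm
        _ = 1 := by rw [hNM]; exact Matrix.map_one _ (map_zero _) (map_one _)
    exact (Matrix.inv_eq_left_inv h1).symm
  have hAconj : A.map (starRingEnd ℂ) = Aᵀ := by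
    ext j k
    simp only [Matrix.map_apply, Matrix.transpose_apply]
    conv_rhs => rw [← hA.1]
    rw [Matrix.conjTranspose_apply]
    rfl
  have hse₀ : star e₀ = (M⁻¹ * Hᴴ * C⁻¹) i := by
    funext j
    rw [he₀]
    simp only [Pi.star_apply, star_star]
  -- constraint for e₀
  have h1 : star e₀ ᵥ* H = (M⁻¹ * A) i := by
    rw [hse₀, rowMul]
    rw [hAdef, Matrix.mul_assoc, Matrix.mul_assoc, Matrix.mul_assoc]
  have h2 : star ((M⁻¹ * A) i) = (M⁻¹ * Aᵀ) i := by
    calc star ((M⁻¹ * A) i) = ((M⁻¹ * A).map (starRingEnd ℂ)) i := by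
          funext k; rfl
      _ = (M⁻¹.map (starRingEnd ℂ) * A.map (starRingEnd ℂ)) i := by rw [Matrix.map_mul]
      _ = (M⁻¹ * Aᵀ) i := by rw [hNreal, hAconj]
  have hc0 : star e₀ ᵥ* H + e₀ ᵥ* H.map (starRingEnd ℂ) = Pi.single i 1 := by
    rw [conj_vecMul H e₀, h1, h2]
    have hsum : M⁻¹ * A + M⁻¹ * Aᵀ = 1 := by rw [← Matrix.mul_add, ← hMeq, hNM]
    have : (M⁻¹ * A) i + (M⁻¹ * Aᵀ) i = (M⁻¹ * A + M⁻¹ * Aᵀ) i := rfl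
    rw [this, hsum]
    funext k
    rcases eq_or_ne i k with h | h
    · simp [Matrix.one_apply, Pi.single_apply, h]
    · simp [Matrix.one_apply, Pi.single_apply, h, h.symm]
  refine ⟨hc0, fun e he => ?_⟩
  -- optimality
  set d : Fin m → ℂ := fun j => e j - e₀ j with hddef
  have he_eq : e = e₀ + d := by funext j; simp [hddef]
  have hgsplit : star e ᵥ* H = star e₀ ᵥ* H + star d ᵥ* H := by
    rw [he_eq]
    rw [show star (e₀ + d) = star e₀ + star d from star_add _ _, Matrix.add_vecMul]
  have hgd : star d ᵥ* H + star (star d ᵥ* H) = 0 := by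
    have he' : star e ᵥ* H + star (star e ᵥ* H) = Pi.single i 1 := by
      rw [← conj_vecMul H e]; exact he
    have hc0' : star e₀ ᵥ* H + star (star e₀ ᵥ* H) = Pi.single i 1 := by
      rw [← conj_vecMul H e₀]; exact hc0
    have key : star d ᵥ* H + star (star d ᵥ* H)
        = (star e ᵥ* H + star (star e ᵥ* H)) - (star e₀ ᵥ* H + star (star e₀ ᵥ* H)) := by
      rw [hgsplit, star_add]; abel
    rw [he', hc0', sub_self] at key
    exact key
  set w : Fin n → ℂ := Hᴴ *ᵥ d with hwdef
  have hwgd : star w = star d ᵥ* H := by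
    funext k
    simp [hwdef, Matrix.mulVec, Matrix.vecMul, dotProduct, Matrix.conjTranspose_apply,
      star_sum, star_mul', mul_comm]
  have hwsum : w + star w = 0 := by
    have := hgd
    rw [← hwgd, star_star] at this
    rw [add_comm]; exact this
  set s : ℂ := star e₀ ⬝ᵥ C *ᵥ d with hsdef
  have hs : s = M⁻¹ i ⬝ᵥ w := by
    rw [hsdef, dotProduct_mulVec, hse₀, rowMul]
    have hrow : M⁻¹ * Hᴴ * C⁻¹ * C = M⁻¹ * Hᴴ := by
      rw [Matrix.mul_assoc, hCC, Matrix.mul_one]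
    rw [hrow]
    have : (M⁻¹ * Hᴴ) i ⬝ᵥ d = ((M⁻¹ * Hᴴ) *ᵥ d) i := rfl
    rw [this, ← Matrix.mulVec_mulVec]
    rfl
  have hNrow : ∀ k, star (M⁻¹ i k) = M⁻¹ i k := by
    intro k
    exact congrFun (congrFun hNreal i) k
  have hstars : star s = M⁻¹ i ⬝ᵥ star w := by
    rw [hs]
    simp only [dotProduct, star_sum, star_mul', Pi.star_apply]
    exact Finset.sum_congr rfl fun k _ => by rw [hNrow k]
  have hcross : s + star s = 0 := by
    rw [hstars, hs, ← dotProduct_add, hwsum, dotProduct_zero]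
  -- expansion of the objective
  have hobj : ∀ v : Fin m → ℂ, obj C v = star v ⬝ᵥ C *ᵥ v + star (star v ⬝ᵥ C *ᵥ v) := by
    intro v
    rw [obj, conj_dot]
  have hCconj : C.map (starRingEnd ℂ) = Cᵀ := by
    ext j k
    simp only [Matrix.map_apply, Matrix.transpose_apply]
    conv_rhs => rw [← hC.1]
    rw [Matrix.conjTranspose_apply]
    rfl
  have ht : star d ⬝ᵥ C *ᵥ e₀ = star s := by
    rw [hsdef, ← conj_dot C e₀ d, hCconj, dotProduct_mulVec e₀ Cᵀ (star d),
      vecMul_transpose, dotProduct_comm]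
  have hq : star (e₀ + d) ⬝ᵥ C *ᵥ (e₀ + d)
      = star e₀ ⬝ᵥ C *ᵥ e₀ + star d ⬝ᵥ C *ᵥ d + (s + star s) := by
    rw [show star (e₀ + d) = star e₀ + star d from star_add _ _, Matrix.mulVec_add,
      add_dotProduct, dotProduct_add, dotProduct_add, ← hsdef, ← ht]
    ring
  have hqsplit : star e ⬝ᵥ C *ᵥ e = star e₀ ⬝ᵥ C *ᵥ e₀ + star d ⬝ᵥ C *ᵥ d := by
    rw [he_eq, hq, hcross, add_zero]
  have hobje : obj C e = obj C e₀ + obj C d := by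
    rw [hobj e, hobj e₀, hobj d, hqsplit, star_add]
    ring
  have h0 : (0 : ℂ) ≤ star d ⬝ᵥ C *ᵥ d := hC.posSemidef.dotProduct_mulVec_nonneg d
  have hstarq : star (star d ⬝ᵥ C *ᵥ d) = star d ⬝ᵥ C *ᵥ d := by
    have him : (star d ⬝ᵥ C *ᵥ d).im = 0 := by
      have := (Complex.le_def.mp h0).2
      simpa using this.symm
    rw [Complex.star_def, Complex.conj_eq_iff_im]
    exact him
  have hd0 : (0 : ℂ) ≤ obj C d := by
    rw [hobj d, hstarq]
    exact add_nonneg h0 h0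
  rw [hobje]
  exact le_add_of_nonneg_right hd0
end

section
/- Let H ∈ C^{m×n} with full column rank and C ∈ C^{m×m} Hermitian positive definite. For any e ∈ C^m satisfying e^H H + e^T H^* = u_i^T, the variance e^H C e + e^T C^* e^* is at least the i-th diagonal entry of (2 Re(H^H C^{-1} H))^{-1}. -/
open Matrix ComplexOrder

private lemma inj_of_rank {m n : ℕ} (H : Matrix (Fin m) (Fin n) ℂ) (hrank : H.rank = n) :
    Function.Injective H.mulVec := by
  have : Function.Injective H.mulVecLin := by
    rw [← LinearMap.ker_eq_bot]
    have h := LinearMap.finrank_range_add_finrank_ker H.mulVecLin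
    rw [Matrix.rank] at hrank
    rw [hrank, Module.finrank_fintype_fun_eq_card] at h
    simp at h
    exact h
  exact this

private lemma posdef_A {m n : ℕ} (H : Matrix (Fin m) (Fin n) ℂ) (C : Matrix (Fin m) (Fin m) ℂ)
    (hC : C.PosDef) (hrank : H.rank = n) : (Hᴴ * C⁻¹ * H).PosDef := by
  have hCi := hC.inv
  refine posDef_iff_dotProduct_mulVec.mpr ⟨?_, fun x hx => ?_⟩
  · have := hCi.isHermitian
    simp [Matrix.IsHermitian, conjTranspose_mul, Matrix.mul_assoc, this.eq]
  · have h1 : H *ᵥ x ≠ 0 := by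
      intro h0
      exact hx (inj_of_rank H hrank (h0.trans (mulVec_zero H).symm))
    have := hCi.dotProduct_mulVec_pos h1
    rwa [star_mulVec, ← dotProduct_mulVec, mulVec_mulVec, mulVec_mulVec] at this

/-- For any `e` satisfying `eᴴ H + eᵀ H* = uᵢᵀ`, the variance `eᴴ C e + eᵀ C* e*` is at least
the `i`-th diagonal entry of `(2 Re(Hᴴ C⁻¹ H))⁻¹`. -/
theorem stmt10 {m n : ℕ} (H : Matrix (Fin m) (Fin n) ℂ) (C : Matrix (Fin m) (Fin m) ℂ)
    (hC : C.PosDef) (hrank : H.rank = n) (i : Fin n) (e : Fin m → ℂ)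
    (he : star e ᵥ* H + e ᵥ* H.map (starRingEnd ℂ) = Pi.single i 1) :
    (((2 : ℂ) • (Hᴴ * C⁻¹ * H).map (fun z => (z.re : ℂ)))⁻¹) i i
      ≤ star e ⬝ᵥ C.mulVec e + e ⬝ᵥ (C.map (starRingEnd ℂ)).mulVec (star e) := by
  classical
  set cj := starRingEnd ℂ with hcj
  set A : Matrix (Fin n) (Fin n) ℂ := Hᴴ * C⁻¹ * H with hAdef
  set B : Matrix (Fin n) (Fin n) ℂ := (2 : ℂ) • A.map (fun z => (z.re : ℂ)) with hBdef
  have hA : A.PosDef := posdef_A H C hC hrank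
  have hAH : Aᴴ = A := hA.isHermitian
  -- B = A + conj A
  have hBeq : B = A + A.map cj := by
    ext a b
    simp only [hBdef, Matrix.smul_apply, Matrix.map_apply, Matrix.add_apply, smul_eq_mul]
    rw [show (A a b + cj (A a b)) = A a b + (starRingEnd ℂ) (A a b) from rfl, Complex.add_conj]
    push_cast; ring
  have hAt : A.map cj = Aᵀ := by
    ext a b
    have : (Aᴴ) a b = A a b := by rw [hAH]
    simp only [conjTranspose_apply] at this
    simp only [Matrix.map_apply, transpose_apply, ← this, hcj]
    rw [starRingEnd_apply, star_star]
  have hB : B.PosDef := by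
    rw [hBeq, hAt]; exact hA.add hA.transpose
  have hBH : Bᴴ = B := hB.isHermitian
  have hBr : B.map cj = B := by
    rw [hBeq]
    ext a b
    simp [hcj]
    ring
  have hBT : Bᵀ = B := by
    have : Bᴴ = (B.map cj)ᵀ := by ext a b; simp [hcj]
    rw [hBr] at this
    rw [← this, hBH]
  -- invertibility facts
  have hCdet : IsUnit C.det := (Matrix.isUnit_iff_isUnit_det C).mp hC.isUnit
  have hBdet : IsUnit B.det := (Matrix.isUnit_iff_isUnit_det B).mp hB.isUnit
  have hCK : C * C⁻¹ = 1 := mul_nonsing_inv _ hCdet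
  have hKC : C⁻¹ * C = 1 := nonsing_inv_mul _ hCdet
  have hBiB : B⁻¹ * B = 1 := nonsing_inv_mul _ hBdet
  have hKH : (C⁻¹)ᴴ = C⁻¹ := hC.inv.isHermitian
  have hBiH : (B⁻¹)ᴴ = B⁻¹ := by rw [conjTranspose_nonsing_inv, hBH]
  have hBiT : (B⁻¹)ᵀ = B⁻¹ := by rw [transpose_nonsing_inv, hBT]
  have hBir : (B⁻¹).map cj = B⁻¹ := by
    have h2 : (B⁻¹).map cj = ((B⁻¹)ᴴ)ᵀ := by ext a b; simp [hcj]
    rw [h2, hBiH, hBiT]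
  have hHt : Hᴴ.map cj = Hᵀ := by ext a b; simp [hcj]
  have hHH : (H.map cj)ᵀ = Hᴴ := by ext a b; simp [hcj]
  have hCt : C.map cj = Cᵀ := by
    ext a b
    have h3 : (Cᴴ) a b = C a b := by rw [hC.isHermitian]
    simp only [conjTranspose_apply] at h3
    simp only [Matrix.map_apply, transpose_apply, ← h3, hcj]
    rw [starRingEnd_apply, star_star]
  set u : Fin n → ℂ := Pi.single i 1 with hu
  have hsu : star u = u := by
    ext j; simp [hu, Pi.single_apply, apply_ite]
  set M : Matrix (Fin m) (Fin n) ℂ := C⁻¹ * (H * B⁻¹) with hM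
  set f : Fin m → ℂ := M *ᵥ u with hf
  set d : Fin m → ℂ := e - f with hd
  -- matrix identities
  have mMH : Mᴴ = B⁻¹ * (Hᴴ * C⁻¹) := by
    rw [hM, conjTranspose_mul, conjTranspose_mul, hKH, hBiH, Matrix.mul_assoc]
  have mMHC : Mᴴ * C = B⁻¹ * Hᴴ := by
    rw [mMH, Matrix.mul_assoc, Matrix.mul_assoc, hKC, Matrix.mul_one]
  have mCM : C * M = H * B⁻¹ := by rw [hM, ← Matrix.mul_assoc, hCK, Matrix.one_mul]
  have mMHH : Mᴴ * H = B⁻¹ * A := by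
    rw [mMH, hAdef, Matrix.mul_assoc, Matrix.mul_assoc]
  have mTr : Mᵀ = (Mᴴ).map cj := by ext a b; simp [hcj]
  have mMt_cH : Mᵀ * H.map cj = B⁻¹ * A.map cj := by
    rw [mTr, ← Matrix.map_mul, mMHH, Matrix.map_mul, hBir]
  have mMt_cC : Mᵀ * C.map cj = B⁻¹ * Hᵀ := by
    rw [mTr, ← Matrix.map_mul, mMHC, Matrix.map_mul, hBir, hHt]
  have mcjM : (Mᴴ)ᵀ = M.map cj := by ext a b; simp [hcj]
  have mcC_cM : C.map cj * M.map cj = H.map cj * B⁻¹ := by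
    rw [← Matrix.map_mul, mCM, Matrix.map_mul, hBir]
  -- star f in two forms
  have hsf : star f = u ᵥ* Mᴴ := by rw [hf, star_mulVec, hsu]
  have hsf2 : star f = M.map cj *ᵥ u := by rw [hsf, ← mcjM, mulVec_transpose]
  have hfr : f = u ᵥ* Mᵀ := by rw [hf, vecMul_transpose]
  -- w-trick : x ⬝ᵥ (u ᵥ* B⁻¹) = (x ᵥ* B⁻¹) ⬝ᵥ u
  have wtrick : ∀ x : Fin n → ℂ, x ⬝ᵥ (u ᵥ* B⁻¹) = (x ᵥ* B⁻¹) ⬝ᵥ u := by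
    intro x
    rw [← hBiT, vecMul_transpose, dotProduct_mulVec, hBiT]
  -- constraint satisfied by f
  have hfH : star f ᵥ* H = u ᵥ* (B⁻¹ * A) := by rw [hsf, vecMul_vecMul, mMHH]
  have hfHc : f ᵥ* H.map cj = u ᵥ* (B⁻¹ * A.map cj) := by
    rw [hfr, vecMul_vecMul, mMt_cH]
  have hABA : B⁻¹ * A + B⁻¹ * A.map cj = 1 := by
    rw [← Matrix.mul_add, ← hBeq, hBiB]
  have hcf : star f ᵥ* H + f ᵥ* H.map cj = u := by
    rw [hfH, hfHc, ← vecMul_add, hABA, vecMul_one]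
  have hcd : (d ᵥ* H.map cj) + (star d ᵥ* H) = 0 := by
    have hsd : star d = star e - star f := by rw [hd, star_sub]
    have h4 : (d ᵥ* H.map cj) + (star d ᵥ* H)
        = (star e ᵥ* H + e ᵥ* H.map cj) - (star f ᵥ* H + f ᵥ* H.map cj) := by
      rw [hd, hsd, sub_vecMul, sub_vecMul]
      abel
    rw [h4, he, hcf, sub_self]
  -- the four cross-term reductions
  have key1 : ∀ y : Fin m → ℂ, star f ⬝ᵥ C *ᵥ y = ((y ᵥ* H.map cj) ᵥ* B⁻¹) ⬝ᵥ u := by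
    intro y
    rw [dotProduct_mulVec, hsf, vecMul_vecMul, mMHC, ← vecMul_vecMul, ← hHH,
      vecMul_transpose, dotProduct_comm, dotProduct_mulVec, wtrick]
  have key2 : ∀ y : Fin m → ℂ, y ⬝ᵥ (C.map cj) *ᵥ star f = ((y ᵥ* H.map cj) ᵥ* B⁻¹) ⬝ᵥ u := by
    intro y
    rw [hsf2, mulVec_mulVec, mcC_cM, ← mulVec_mulVec, dotProduct_mulVec, dotProduct_mulVec]
  have key3 : ∀ y : Fin m → ℂ, y ⬝ᵥ C *ᵥ f = ((y ᵥ* H) ᵥ* B⁻¹) ⬝ᵥ u := by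
    intro y
    rw [hf, mulVec_mulVec, mCM, ← mulVec_mulVec, dotProduct_mulVec, dotProduct_mulVec]
  have key4 : ∀ y : Fin m → ℂ, f ⬝ᵥ (C.map cj) *ᵥ y = ((y ᵥ* H) ᵥ* B⁻¹) ⬝ᵥ u := by
    intro y
    rw [dotProduct_mulVec, hfr, vecMul_vecMul, mMt_cC, ← vecMul_vecMul,
      vecMul_transpose, dotProduct_comm, dotProduct_mulVec, wtrick]
  -- main term value
  have hmain1 : star f ⬝ᵥ C *ᵥ f = u ᵥ* (B⁻¹ * A * B⁻¹) ⬝ᵥ u := by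
    rw [key3 (star f), hfH, vecMul_vecMul]
  have hmain2 : f ⬝ᵥ (C.map cj) *ᵥ star f = u ᵥ* (B⁻¹ * A.map cj * B⁻¹) ⬝ᵥ u := by
    rw [key2 f, hfHc, vecMul_vecMul]
  have hdiag : u ᵥ* B⁻¹ ⬝ᵥ u = B⁻¹ i i := by
    simp [hu, Matrix.vecMul, dotProduct, Pi.single_apply]
  have hmain : star f ⬝ᵥ C *ᵥ f + f ⬝ᵥ (C.map cj) *ᵥ star f = B⁻¹ i i := by
    rw [hmain1, hmain2, ← add_dotProduct, ← vecMul_add, ← Matrix.add_mul, hABA,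
      Matrix.one_mul, hdiag]
  -- cross terms vanish
  have hsum0 : ((d ᵥ* H.map cj) ᵥ* B⁻¹) ⬝ᵥ u + ((star d ᵥ* H) ᵥ* B⁻¹) ⬝ᵥ u = 0 := by
    rw [← add_dotProduct, ← add_vecMul, hcd, zero_vecMul, zero_dotProduct]
  -- nonnegativity of remainder
  have hq1 : 0 ≤ star d ⬝ᵥ C *ᵥ d := hC.posSemidef.dotProduct_mulVec_nonneg d
  have hq2 : 0 ≤ d ⬝ᵥ (C.map cj) *ᵥ star d := by
    have := hC.transpose.posSemidef.dotProduct_mulVec_nonneg (star d)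
    rwa [star_star, ← hCt] at this
  -- expansion
  have hef : e = f + d := by rw [hd]; abel
  have hse : star e = star f + star d := by rw [hef, star_add]
  have hexp : star e ⬝ᵥ C *ᵥ e + e ⬝ᵥ (C.map cj) *ᵥ star e
      = (star f ⬝ᵥ C *ᵥ f + f ⬝ᵥ (C.map cj) *ᵥ star f)
        + ((star f ⬝ᵥ C *ᵥ d + d ⬝ᵥ (C.map cj) *ᵥ star f)
          + (star d ⬝ᵥ C *ᵥ f + f ⬝ᵥ (C.map cj) *ᵥ star d))
        + (star d ⬝ᵥ C *ᵥ d + d ⬝ᵥ (C.map cj) *ᵥ star d) := by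
    rw [hse, hef]
    simp only [mulVec_add, dotProduct_add, add_dotProduct]
    ring
  have hcross : (star f ⬝ᵥ C *ᵥ d + d ⬝ᵥ (C.map cj) *ᵥ star f)
      + (star d ⬝ᵥ C *ᵥ f + f ⬝ᵥ (C.map cj) *ᵥ star d) = 0 := by
    rw [key1 d, key2 d, key3 (star d), key4 (star d)]
    linear_combination 2 * hsum0
  calc B⁻¹ i i ≤ B⁻¹ i i + (star d ⬝ᵥ C *ᵥ d + d ⬝ᵥ (C.map cj) *ᵥ star d) :=
        le_add_of_nonneg_right (add_nonneg hq1 hq2)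
    _ = star e ⬝ᵥ C *ᵥ e + e ⬝ᵥ (C.map cj) *ᵥ star e := by
        rw [hexp, hmain, hcross, add_zero]
    _ = star e ⬝ᵥ C.mulVec e + e ⬝ᵥ (C.map (starRingEnd ℂ)).mulVec (star e) := rfl
end

section
/- Let H ∈ C^{m×n} with full column rank and C ∈ C^{m×m} Hermitian positive definite. Let A = H^H C^{-1} H (the inverse covariance of the BLUE) and B = 2 Re(A). Then for every real vector v ∈ R^n, v^T B^{-1} v ≤ (1/2) v^T Re(A^{-1}) v · 2, and more precisely the i-th diagonal entry of B^{-1} = (2 Re(A))^{-1} is at most the i-th diagonal entry of (1/2) (A^{-1} + (A^{-1})^*); i.e., the BWLUE for real parameters has elementwise variance no larger than half the sum of the BLUE's variance and its conjugate. -/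
open Matrix ComplexOrder


private lemma helperIneq {n : ℕ} {M : Matrix (Fin n) (Fin n) ℂ} (hM : M.PosSemidef)
    (u w : Fin n → ℂ) (hu : star u = u) (hv : star (M *ᵥ w) = M *ᵥ w) :
    (2:ℂ) * (u ⬝ᵥ (M *ᵥ w)) ≤ u ⬝ᵥ M *ᵥ u + star w ⬝ᵥ (M *ᵥ w) := by
  have h := hM.dotProduct_mulVec_nonneg (u - w)
  have hwu : star w ⬝ᵥ (M *ᵥ u) = u ⬝ᵥ (M *ᵥ w) := by
    rw [dotProduct_mulVec, ← hM.1.eq, ← star_mulVec, hM.1.eq, hv, dotProduct_comm]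
  rw [star_sub, hu, mulVec_sub, dotProduct_sub, sub_dotProduct, sub_dotProduct, hwu] at h
  linear_combination h

private lemma starMulVec {n m : ℕ} (M : Matrix (Fin n) (Fin m) ℂ) (x : Fin m → ℂ) :
    star (M *ᵥ x) = (M.map (starRingEnd ℂ)) *ᵥ (star x) := by
  funext i
  simp [mulVec, dotProduct, Matrix.map_apply, star_sum]


/-- With `A = Hᴴ C⁻¹ H` and `B = 2 Re A`: for every real vector `v`,
`vᵀ B⁻¹ v ≤ vᵀ Re(A⁻¹) v`, and the `i`-th diagonal entry of `B⁻¹` is at most the `i`-th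
diagonal entry of `(1/2)(A⁻¹ + (A⁻¹)*)`. -/
theorem stmt11 {m n : ℕ} (H : Matrix (Fin m) (Fin n) ℂ) (C : Matrix (Fin m) (Fin m) ℂ)
    (hC : C.PosDef) (hrank : H.rank = n)
    (A B : Matrix (Fin n) (Fin n) ℂ)
    (hA : A = Hᴴ * C⁻¹ * H)
    (hB : B = (2 : ℂ) • A.map (fun z => (z.re : ℂ))) :
    (∀ v : Fin n → ℝ,
      (fun j => (v j : ℂ)) ⬝ᵥ B⁻¹.mulVec (fun j => (v j : ℂ))
        ≤ (fun j => (v j : ℂ)) ⬝ᵥ ((A⁻¹).map (fun z => (z.re : ℂ))).mulVec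
            (fun j => (v j : ℂ))) ∧
    ∀ i, B⁻¹ i i ≤ ((1 / 2 : ℂ) • (A⁻¹ + (A⁻¹).map (starRingEnd ℂ))) i i := by
  -- injectivity of H
  have hinj : ∀ x : Fin n → ℂ, H *ᵥ x = 0 → x = 0 := by
    intro x hx
    have h := LinearMap.finrank_range_add_finrank_ker H.mulVecLin
    rw [Module.finrank_pi] at h
    have hr : H.rank = Module.finrank ℂ (LinearMap.range H.mulVecLin) := rfl
    rw [← hr, hrank, Fintype.card_fin, Nat.add_eq_left] at h
    have hker : LinearMap.ker H.mulVecLin = ⊥ := Submodule.finrank_eq_zero.mp h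
    have : x ∈ LinearMap.ker H.mulVecLin := by simpa [Matrix.mulVecLin_apply] using hx
    simpa [hker] using this
  -- A is positive definite
  have hApos : A.PosDef := by
    subst hA
    refine Matrix.PosDef.of_dotProduct_mulVec_pos (isHermitian_conjTranspose_mul_mul H hC.inv.isHermitian) fun x hx => ?_
    have hHx : H *ᵥ x ≠ 0 := fun hc => hx (hinj x hc)
    simpa only [star_mulVec, dotProduct_mulVec, vecMul_vecMul] using hC.inv.dotProduct_mulVec_pos hHx
  clear hA hinj hrank hC
  -- B = A + conj A
  have hBeq : B = A + A.map (starRingEnd ℂ) := by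
    subst hB
    ext i j
    simp only [Matrix.add_apply, Matrix.map_apply, Matrix.smul_apply, smul_eq_mul]
    rw [Complex.add_conj]
    push_cast
    ring
  -- conj A = Aᵀ
  have hconjA : A.map (starRingEnd ℂ) = Aᵀ := by
    ext i j
    simpa [Matrix.map_apply] using congrFun (congrFun hApos.1 j) i
  have hBpos : B.PosDef := by
    rw [hBeq, hconjA]
    exact hApos.add_posSemidef hApos.posSemidef.transpose
  -- invertibility
  have hAinv : A * A⁻¹ = 1 := A.mul_nonsing_inv (A.isUnit_iff_isUnit_det.mp hApos.isUnit)
  have hBinv : B * B⁻¹ = 1 := B.mul_nonsing_inv (B.isUnit_iff_isUnit_det.mp hBpos.isUnit)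
  -- B⁻¹ has real entries
  have hBreal : B.map (starRingEnd ℂ) = B := by
    rw [hBeq]
    ext i j
    simp only [Matrix.map_apply, Matrix.add_apply, map_add, RingHom.coe_coe,
      Complex.conj_conj, starRingEnd_apply, star_star]
    ring
  have hBinvReal : B⁻¹.map (starRingEnd ℂ) = B⁻¹ := by
    have hone : ((B * B⁻¹).map (starRingEnd ℂ)) = 1 := by
      rw [hBinv]; ext i j; simp [Matrix.map_apply, Matrix.one_apply, apply_ite]
    have h2 : B.map (starRingEnd ℂ) * B⁻¹.map (starRingEnd ℂ) = 1 := by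
      rw [← Matrix.map_mul]; exact hone
    rw [hBreal] at h2
    exact (inv_eq_right_inv h2).symm
  -- key inequality
  have key : ∀ vc : Fin n → ℂ, star vc = vc →
      vc ⬝ᵥ B⁻¹ *ᵥ vc ≤ (1/2 : ℂ) * (vc ⬝ᵥ (A⁻¹ + (A⁻¹).map (starRingEnd ℂ)) *ᵥ vc) := by
    intro vc hvc
    set u : Fin n → ℂ := B⁻¹ *ᵥ vc with hu_def
    set w : Fin n → ℂ := A⁻¹ *ᵥ vc with hw_def
    have hu : star u = u := by
      rw [hu_def, starMulVec, hBinvReal, hvc]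
    have hAw : A *ᵥ w = vc := by
      rw [hw_def, mulVec_mulVec, hAinv, one_mulVec]
    have hconjAw : A.map (starRingEnd ℂ) *ᵥ star w = vc := by
      rw [← starMulVec, hAw, hvc]
    have h1 := helperIneq hApos.posSemidef u w hu (by rw [hAw, hvc])
    have hconjApos : (A.map (starRingEnd ℂ)).PosSemidef := by
      rw [hconjA]; exact hApos.posSemidef.transpose
    have h2 := helperIneq hconjApos u (star w) hu (by rw [hconjAw, hvc])
    rw [hAw] at h1
    rw [hconjAw, star_star] at h2
    -- u ⬝ (A + conjA) u = u ⬝ B u = u ⬝ vc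
    have hBu : u ⬝ᵥ A *ᵥ u + u ⬝ᵥ (A.map (starRingEnd ℂ)) *ᵥ u = u ⬝ᵥ vc := by
      rw [← dotProduct_add, ← add_mulVec, ← hBeq, hu_def, mulVec_mulVec, hBinv, one_mulVec]
    have h3 : (4:ℂ) * (u ⬝ᵥ vc) ≤ u ⬝ᵥ vc + (star w ⬝ᵥ vc + w ⬝ᵥ vc) := by
      have := add_le_add h1 h2
      rw [show u ⬝ᵥ A *ᵥ u + star w ⬝ᵥ vc + (u ⬝ᵥ (A.map (starRingEnd ℂ)) *ᵥ u + w ⬝ᵥ vc)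
          = (u ⬝ᵥ A *ᵥ u + u ⬝ᵥ (A.map (starRingEnd ℂ)) *ᵥ u) + (star w ⬝ᵥ vc + w ⬝ᵥ vc)
          by ring, hBu] at this
      linear_combination this
    have ht0 : (0:ℂ) ≤ u ⬝ᵥ vc := by
      have := hBpos.inv.posSemidef.dotProduct_mulVec_nonneg vc
      rw [hvc] at this
      rw [dotProduct_comm]
      exact this
    have h5 : (2:ℂ) * (u ⬝ᵥ vc) ≤ star w ⬝ᵥ vc + w ⬝ᵥ vc := by
      have h6 : (3:ℂ) * (u ⬝ᵥ vc) ≤ star w ⬝ᵥ vc + w ⬝ᵥ vc := by linear_combination h3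
      calc (2:ℂ) * (u ⬝ᵥ vc) ≤ 2 * (u ⬝ᵥ vc) + (u ⬝ᵥ vc) := le_add_of_nonneg_right ht0
        _ = 3 * (u ⬝ᵥ vc) := by ring
        _ ≤ _ := h6
    have hgoalRHS : vc ⬝ᵥ (A⁻¹ + (A⁻¹).map (starRingEnd ℂ)) *ᵥ vc
        = star w ⬝ᵥ vc + w ⬝ᵥ vc := by
      rw [add_mulVec, dotProduct_add, ← hw_def]
      rw [show (A⁻¹).map (starRingEnd ℂ) *ᵥ vc = star w by
        rw [hw_def, starMulVec, hvc]]
      rw [dotProduct_comm vc w, dotProduct_comm vc (star w)]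
      ring
    rw [hgoalRHS, dotProduct_comm]
    have half : (0:ℂ) ≤ 1/2 := by
      rw [show (1/2 : ℂ) = ((1/2 : ℝ) : ℂ) by norm_num, Complex.zero_le_real]; norm_num
    have := mul_le_mul_of_nonneg_left h5 half
    calc u ⬝ᵥ vc = (1/2:ℂ) * (2 * (u ⬝ᵥ vc)) := by ring
      _ ≤ (1/2:ℂ) * (star w ⬝ᵥ vc + w ⬝ᵥ vc) := this
  constructor
  · intro v
    have hvc : star (fun j => ((v j : ℂ))) = fun j => ((v j : ℂ)) := by
      funext j; simp [Complex.conj_ofReal]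
    have hk := key _ hvc
    have hmap : (A⁻¹).map (fun z => (z.re : ℂ))
        = (1/2 : ℂ) • (A⁻¹ + (A⁻¹).map (starRingEnd ℂ)) := by
      ext i j
      simp only [Matrix.map_apply, Matrix.smul_apply, Matrix.add_apply, smul_eq_mul]
      rw [Complex.add_conj]
      push_cast
      ring
    rw [hmap]
    rw [smul_mulVec, dotProduct_smul, smul_eq_mul]
    exact hk
  · intro i
    have hvc : star (Pi.single i 1 : Fin n → ℂ) = Pi.single i 1 := by
      funext j
      simp [Pi.single_apply, apply_ite]
    have hk := key _ hvc
    have hL : (Pi.single i 1 : Fin n → ℂ) ⬝ᵥ B⁻¹ *ᵥ (Pi.single i 1) = B⁻¹ i i := by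
      simp [mulVec_single]
    have hR : (Pi.single i 1 : Fin n → ℂ) ⬝ᵥ (A⁻¹ + (A⁻¹).map (starRingEnd ℂ)) *ᵥ
        (Pi.single i 1) = (A⁻¹ + (A⁻¹).map (starRingEnd ℂ)) i i := by
      simp [mulVec_single]
    rw [hL, hR] at hk
    simpa using hk
end
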